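/- Let C, Λ be real numbers with Λ ≠ 0, and define F₁ : ℝ × ℝ → ℝ by F₁(v, τ) = ((cos τ − C sin τ)·Λ·v − (C²+1)·sin τ)·e^{C(τ+π)} + Λ·v. Then F₁(0,0) = 0 and ∂F₁/∂τ(0,0) = −(C²+1)e^{πC} ≠ 0, and there exist ε > 0 and a function τ : ℝ → ℝ, analytic at 0, such that τ(0) = 0, F₁(v, τ(v)) = 0 for all |v| < ε, with first derivative τ′(0) = (1 + e^{−πC})Λ/(C²+1) and second derivative τ″(0) = −2C·((1 + e^{−πC})Λ/(C²+1))². -/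

import Mathlib

open Real Filter Topology

/-! Auxiliary analyticity of real sin and cos. -/

lemma analyticAt_csin (z : ℂ) : AnalyticAt ℂ Complex.sin z := by
  have h : Complex.sin = fun z : ℂ =>
      (Complex.exp (-z * Complex.I) - Complex.exp (z * Complex.I)) * Complex.I / 2 := by
    funext z; rw [Complex.sin]
  rw [h]
  exact ((((analyticAt_cexp.comp ((analyticAt_id.neg).mul analyticAt_const)).sub
    (analyticAt_cexp.comp (analyticAt_id.mul analyticAt_const))).mul analyticAt_const).div
    analyticAt_const (by norm_num))

lemma analyticAt_ccos (z : ℂ) : AnalyticAt ℂ Complex.cos z := by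
  have h : Complex.cos = fun z : ℂ =>
      (Complex.exp (z * Complex.I) + Complex.exp (-z * Complex.I)) / 2 := by
    funext z; rw [Complex.cos]
  rw [h]
  exact (((analyticAt_cexp.comp (analyticAt_id.mul analyticAt_const)).add
    (analyticAt_cexp.comp ((analyticAt_id.neg).mul analyticAt_const))).div
    analyticAt_const (by norm_num))

lemma analyticAt_rsin (x : ℝ) : AnalyticAt ℝ Real.sin x := by
  have h1 : AnalyticAt ℝ (fun t : ℝ => Complex.sin t) x :=
    ((analyticAt_csin (x : ℂ)).restrictScalars).comp (Complex.ofRealCLM.analyticAt x)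
  have h2 : AnalyticAt ℝ (fun t : ℝ => (Complex.sin t).re) x :=
    (Complex.reCLM.analyticAt _).comp h1
  exact h2.congr (by filter_upwards with t; simp [Complex.sin_ofReal_re])

lemma analyticAt_rcos (x : ℝ) : AnalyticAt ℝ Real.cos x := by
  have h1 : AnalyticAt ℝ (fun t : ℝ => Complex.cos t) x :=
    ((analyticAt_ccos (x : ℂ)).restrictScalars).comp (Complex.ofRealCLM.analyticAt x)
  have h2 : AnalyticAt ℝ (fun t : ℝ => (Complex.cos t).re) x :=
    (Complex.reCLM.analyticAt _).comp h1
  exact h2.congr (by filter_upwards with t; simp [Complex.cos_ofReal_re])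

/-! Auxiliary functions. -/

noncomputable def Ee (C τ : ℝ) : ℝ := Real.exp (C * (τ + π))
noncomputable def Nn (C τ : ℝ) : ℝ := (C ^ 2 + 1) * Real.sin τ * Ee C τ
noncomputable def Nd (C τ : ℝ) : ℝ := ((C ^ 2 + 1) * Real.cos τ + (C ^ 2 + 1) * C * Real.sin τ) * Ee C τ
noncomputable def Dd (C Λ τ : ℝ) : ℝ := Λ * ((Real.cos τ - C * Real.sin τ) * Ee C τ + 1)
noncomputable def gg (C Λ τ : ℝ) : ℝ := Nn C τ / Dd C Λ τ
noncomputable def g1 (C Λ τ : ℝ) : ℝ :=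
  (Nd C τ * Dd C Λ τ + Nn C τ * (Λ * Nn C τ)) / (Dd C Λ τ) ^ 2

lemma hasDerivAt_Ee (C τ : ℝ) : HasDerivAt (Ee C) (C * Ee C τ) τ := by
  have h : HasDerivAt (fun t : ℝ => C * (t + π)) C τ := by
    simpa using ((hasDerivAt_id τ).add_const π).const_mul C
  show HasDerivAt (fun t => Real.exp (C * (t + π))) (C * Ee C τ) τ
  simpa [Ee, mul_comm] using h.exp

lemma hasDerivAt_Nn (C τ : ℝ) : HasDerivAt (Nn C) (Nd C τ) τ := by
  have h := (((Real.hasDerivAt_sin τ).const_mul (C ^ 2 + 1)).mul (hasDerivAt_Ee C τ))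
  exact h.congr_deriv (Eq.symm (by simp only [Nd]; ring))

lemma hasDerivAt_Nd (C τ : ℝ) : HasDerivAt (Nd C)
    ((((C ^ 2 + 1) * C * Real.cos τ - (C ^ 2 + 1) * Real.sin τ) +
      ((C ^ 2 + 1) * Real.cos τ + (C ^ 2 + 1) * C * Real.sin τ) * C) * Ee C τ) τ := by
  have h1 : HasDerivAt (fun t => (C ^ 2 + 1) * Real.cos t + (C ^ 2 + 1) * C * Real.sin t)
      ((C ^ 2 + 1) * -Real.sin τ + (C ^ 2 + 1) * C * Real.cos τ) τ :=
    ((Real.hasDerivAt_cos τ).const_mul (C ^ 2 + 1)).add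
      (((Real.hasDerivAt_sin τ).const_mul ((C ^ 2 + 1) * C)))
  have h := h1.mul (hasDerivAt_Ee C τ)
  exact h.congr_deriv (Eq.symm (by simp [Ee]; ring))

lemma hasDerivAt_Dd (C Λ τ : ℝ) : HasDerivAt (Dd C Λ) (-(Λ * Nn C τ)) τ := by
  have h1 : HasDerivAt (fun t => Real.cos t - C * Real.sin t)
      (-Real.sin τ - C * Real.cos τ) τ :=
    (Real.hasDerivAt_cos τ).sub ((Real.hasDerivAt_sin τ).const_mul C)
  have h := (((h1.mul (hasDerivAt_Ee C τ)).add_const 1).const_mul Λ)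
  exact h.congr_deriv (Eq.symm (by simp [Nn, Ee]; ring))

lemma analyticAt_Ee (C x : ℝ) : AnalyticAt ℝ (Ee C) x := by
  apply analyticAt_rexp.comp
  have h1 : AnalyticAt ℝ (fun t : ℝ => t + π) x := analyticAt_id.add analyticAt_const
  exact analyticAt_const.mul h1

lemma analyticAt_Nn (C x : ℝ) : AnalyticAt ℝ (Nn C) x :=
  (analyticAt_const.mul (analyticAt_rsin x)).mul (analyticAt_Ee C x)

lemma analyticAt_Dd (C Λ x : ℝ) : AnalyticAt ℝ (Dd C Λ) x := by
  have h1 : AnalyticAt ℝ (fun t => (Real.cos t - C * Real.sin t) * Ee C t + 1) x :=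
    AnalyticAt.add (((analyticAt_rcos x).sub (analyticAt_const.mul (analyticAt_rsin x))).mul
      (analyticAt_Ee C x)) analyticAt_const
  exact analyticAt_const.mul h1

lemma hasDerivAt_gg (C Λ τ : ℝ) (h : Dd C Λ τ ≠ 0) :
    HasDerivAt (gg C Λ) (g1 C Λ τ) τ := by
  have hd := (hasDerivAt_Nn C τ).div (hasDerivAt_Dd C Λ τ) h
  exact hd.congr_deriv (Eq.symm (by simp only [g1]; ring))

lemma hasDerivAt_g1_zero (C Λ : ℝ) (hD : Dd C Λ 0 ≠ 0) :
    HasDerivAt (g1 C Λ) (2 * C * (C ^ 2 + 1) * Real.exp (C * π) / Dd C Λ 0) 0 := by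
  have hP : HasDerivAt (fun τ => Nd C τ * Dd C Λ τ + Nn C τ * (Λ * Nn C τ))
      ((((C ^ 2 + 1) * C * Real.cos 0 - (C ^ 2 + 1) * Real.sin 0) +
        ((C ^ 2 + 1) * Real.cos 0 + (C ^ 2 + 1) * C * Real.sin 0) * C) * Ee C 0 * Dd C Λ 0 +
        Nd C 0 * -(Λ * Nn C 0) +
        (Nd C 0 * (Λ * Nn C 0) + Nn C 0 * (Λ * Nd C 0))) 0 := by
    exact ((hasDerivAt_Nd C 0).mul (hasDerivAt_Dd C Λ 0)).add
      ((hasDerivAt_Nn C 0).mul ((hasDerivAt_Nn C 0).const_mul Λ))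
  have hQ : HasDerivAt (fun τ => (Dd C Λ τ) ^ 2)
      (2 * Dd C Λ 0 ^ 1 * -(Λ * Nn C 0)) 0 := by
    simpa using (hasDerivAt_Dd C Λ 0).fun_pow 2
  have h := hP.div hQ (pow_ne_zero 2 hD)
  refine h.congr_deriv (Eq.symm ?_)
  have hN0 : Nn C 0 = 0 := by simp [Nn]
  have hE : Ee C 0 = Real.exp (C * π) := by simp [Ee]
  rw [hN0, hE]
  have hNd0 : Nd C 0 = (C ^ 2 + 1) * Real.exp (C * π) := by simp [Nd, hE]
  rw [hNd0, Real.cos_zero, Real.sin_zero]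
  field_simp
  ring


/-- The desingularized half-return closing function F₁ for the field X. -/
noncomputable def Fclose (C Λ v τ : ℝ) : ℝ :=
  ((Real.cos τ - C * Real.sin τ) * Λ * v - (C ^ 2 + 1) * Real.sin τ) *
    Real.exp (C * (τ + π)) + Λ * v

lemma Fclose_eq (C Λ v τ : ℝ) : Fclose C Λ v τ = v * Dd C Λ τ - Nn C τ := by
  simp only [Fclose, Dd, Nn, Ee]; ring

/-- The desingularized closing equation F₁(v,τ) = 0 has an analytic solution τ(v)
near v = 0 with the stated first and second derivatives at 0. -/
theorem half_return_time_analytic (C Λ : ℝ) (hΛ : Λ ≠ 0) :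
    Fclose C Λ 0 0 = 0 ∧
    deriv (fun τ => Fclose C Λ 0 τ) 0 = -(C ^ 2 + 1) * Real.exp (π * C) ∧
    -(C ^ 2 + 1) * Real.exp (π * C) ≠ 0 ∧
    ∃ ε > 0, ∃ τ : ℝ → ℝ, AnalyticAt ℝ τ 0 ∧ τ 0 = 0 ∧
      (∀ v : ℝ, |v| < ε → Fclose C Λ v (τ v) = 0) ∧
      deriv τ 0 = (1 + Real.exp (-π * C)) * Λ / (C ^ 2 + 1) ∧
      iteratedDeriv 2 τ 0 =
        -2 * C * ((1 + Real.exp (-π * C)) * Λ / (C ^ 2 + 1)) ^ 2 := by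
  have hC1 : (C ^ 2 + 1 : ℝ) ≠ 0 := by positivity
  have hE0pos : (0 : ℝ) < Real.exp (C * π) := Real.exp_pos _
  have hD0 : Dd C Λ 0 = Λ * (Real.exp (C * π) + 1) := by simp [Dd, Ee]
  have hD0ne : Dd C Λ 0 ≠ 0 := by
    rw [hD0]; exact mul_ne_zero hΛ (by positivity)
  have hgg0 : gg C Λ 0 = 0 := by simp [gg, Nn]
  set a : ℝ := (C ^ 2 + 1) * Real.exp (C * π) / Dd C Λ 0 with ha
  have hane : a ≠ 0 := div_ne_zero (mul_ne_zero hC1 hE0pos.ne') hD0ne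
  have hg1_0 : g1 C Λ 0 = a := by
    have hN0 : Nn C 0 = 0 := by simp [Nn]
    have hNd0 : Nd C 0 = (C ^ 2 + 1) * Real.exp (C * π) := by simp [Nd, Ee]
    simp only [g1, hN0, hNd0, ha]
    rw [pow_two]
    field_simp
    ring
  -- `gg` is analytic with nonzero derivative at `0`
  have hgga : AnalyticAt ℝ (gg C Λ) 0 :=
    (analyticAt_Nn C 0).div (analyticAt_Dd C Λ 0) hD0ne
  have hgd : HasDerivAt (gg C Λ) a 0 := by
    rw [← hg1_0]; exact hasDerivAt_gg C Λ 0 hD0ne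
  have hgs : HasStrictDerivAt (gg C Λ) a 0 := by
    have h1 : ContDiffAt ℝ 1 (gg C Λ) 0 := hgga.contDiffAt
    have h2 := h1.hasStrictDerivAt one_ne_zero
    rwa [hgd.deriv] at h2
  -- local inverse
  set τf : ℝ → ℝ := hgs.localInverse (gg C Λ) a 0 hane with hτf
  have hτgg0 : τf (gg C Λ 0) = 0 :=
    HasStrictFDerivAt.localInverse_apply_image (hgs.hasStrictFDerivAt_equiv hane)
  have hτ00 : τf 0 = 0 := by rwa [hgg0] at hτgg0
  have hτana : AnalyticAt ℝ τf 0 := by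
    have hsf := hgs.hasStrictFDerivAt_equiv hane
    have h := (hsf.toOpenPartialHomeomorph (gg C Λ)).analyticAt_symm'
      hsf.mem_toOpenPartialHomeomorph_source hgga hsf.hasFDerivAt.fderiv
    have he : ((hsf.toOpenPartialHomeomorph (gg C Λ)) 0 : ℝ) = 0 := hgg0
    rw [he] at h
    exact h
  have hτs : HasStrictDerivAt τf a⁻¹ 0 := by
    have h := hgs.to_localInverse (hf' := hane)
    rwa [hgg0] at h
  have hτd : HasDerivAt τf a⁻¹ 0 := hτs.hasDerivAt
  have hτderiv : deriv τf 0 = a⁻¹ := hτd.deriv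
  -- right inverse eventually
  have ev_right : ∀ᶠ v in 𝓝 (0 : ℝ), gg C Λ (τf v) = v := by
    have h := HasStrictFDerivAt.eventually_right_inverse (hgs.hasStrictFDerivAt_equiv hane)
    rwa [hgg0] at h
  -- eventual facts
  have hτcont : ContinuousAt τf 0 := hτana.continuousAt
  have hτ_tend : Filter.Tendsto τf (𝓝 0) (𝓝 0) := by
    have := hτcont.tendsto; rwa [hτ00] at this
  have hDne_ev : ∀ᶠ y in 𝓝 (0 : ℝ), Dd C Λ y ≠ 0 :=
    (analyticAt_Dd C Λ 0).continuousAt.eventually_ne hD0ne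
  have hgg_ev : ∀ᶠ y in 𝓝 (0 : ℝ), HasDerivAt (gg C Λ) (g1 C Λ y) y :=
    hDne_ev.mono fun y hy => hasDerivAt_gg C Λ y hy
  have hcomp_ev : ∀ᶠ v in 𝓝 (0 : ℝ), HasDerivAt (gg C Λ) (g1 C Λ (τf v)) (τf v) :=
    hτ_tend.eventually hgg_ev
  have hτdiff : ∀ᶠ v in 𝓝 (0 : ℝ), DifferentiableAt ℝ τf v :=
    hτana.eventually_analyticAt.mono fun v h => h.differentiableAt
  -- the key eventual identity for derivatives
  have ev_right' : (fun v => gg C Λ (τf v)) =ᶠ[𝓝 (0 : ℝ)] id := by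
    filter_upwards [ev_right] with v hv using hv
  have hder := ev_right'.deriv
  have key : (fun v => g1 C Λ (τf v) * deriv τf v) =ᶠ[𝓝 (0 : ℝ)] (fun _ => 1) := by
    filter_upwards [hder, hτdiff, hcomp_ev] with v h1 h2 h3
    have h4 : HasDerivAt (fun v => gg C Λ (τf v)) (g1 C Λ (τf v) * deriv τf v) v :=
      h3.comp v h2.hasDerivAt
    have h5 := h4.deriv
    rw [h1, deriv_id] at h5
    exact h5.symm
  -- analyticity of deriv τf at 0
  have hdτana : AnalyticAt ℝ (deriv τf) 0 := by
    obtain ⟨s, hs, hsub⟩ := hτana.eventually_analyticAt.exists_mem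
    exact AnalyticOnNhd.deriv (fun x hx => hsub x hx) 0 (mem_of_mem_nhds hs)
  have hdτ : HasDerivAt (deriv τf) (deriv (deriv τf) 0) 0 :=
    hdτana.differentiableAt.hasDerivAt
  -- derivative of g1 ∘ τf at 0
  set b : ℝ := 2 * C * (C ^ 2 + 1) * Real.exp (C * π) / Dd C Λ 0 with hb
  have hg1τ : HasDerivAt (fun v => g1 C Λ (τf v)) (b * a⁻¹) 0 := by
    have h5 : HasDerivAt (g1 C Λ) b (τf 0) := by
      rw [hτ00]; exact hasDerivAt_g1_zero C Λ hD0ne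
    exact h5.comp 0 hτd
  have hprod : HasDerivAt (fun v => g1 C Λ (τf v) * deriv τf v)
      (b * a⁻¹ * deriv τf 0 + g1 C Λ (τf 0) * deriv (deriv τf) 0) 0 :=
    hg1τ.mul hdτ
  have hkey : deriv (fun v => g1 C Λ (τf v) * deriv τf v) 0
      = deriv (fun _ : ℝ => (1 : ℝ)) 0 := key.deriv_eq
  rw [hprod.deriv, deriv_const] at hkey
  rw [hτ00, hg1_0, hτderiv] at hkey
  -- hkey : b * a⁻¹ * a⁻¹ + a * deriv (deriv τf) 0 = 0
  have hd2 : deriv (deriv τf) 0 = -(b * a⁻¹ * a⁻¹) / a := by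
    field_simp at hkey ⊢
    linarith
  have hb2a : b = 2 * C * a := by rw [hb, ha]; ring
  have hd2' : deriv (deriv τf) 0 = -2 * C * (a⁻¹) ^ 2 := by
    rw [hd2, hb2a, pow_two]
    rw [div_eq_iff hane]
    field_simp
  -- value of a⁻¹
  have hainv : a⁻¹ = (1 + Real.exp (-π * C)) * Λ / (C ^ 2 + 1) := by
    rw [ha, hD0]
    have h1 : Real.exp (-π * C) = (Real.exp (C * π))⁻¹ := by
      rw [← Real.exp_neg]; ring_nf
    rw [h1]
    field_simp
  refine ⟨by simp [Fclose], ?_, ?_, ?_⟩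
  · have hfe : (fun t => Fclose C Λ 0 t) = fun t => -Nn C t := by
      funext t; simp only [Fclose, Nn, Ee]; ring
    rw [hfe, ((hasDerivAt_Nn C 0).fun_neg).deriv]
    have hNd0 : Nd C 0 = (C ^ 2 + 1) * Real.exp (C * π) := by simp [Nd, Ee]
    rw [hNd0, mul_comm C π]
    ring
  · exact mul_ne_zero (neg_ne_zero.mpr hC1) (Real.exp_pos _).ne'
  · -- the closing property eventually
    have hclose_ev : ∀ᶠ v in 𝓝 (0 : ℝ), Fclose C Λ v (τf v) = 0 := by
      filter_upwards [ev_right, hτ_tend.eventually hDne_ev] with v h1 h2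
      have h3 : Nn C (τf v) = v * Dd C Λ (τf v) := by
        have := (div_eq_iff h2).mp h1
        simpa [gg] using this
      rw [Fclose_eq, ← h3, sub_self]
    rw [Metric.eventually_nhds_iff] at hclose_ev
    obtain ⟨ε, hε, hball⟩ := hclose_ev
    refine ⟨ε, hε, τf, hτana, hτ00, ?_, ?_, ?_⟩
    · intro v hv
      exact hball (by simpa [Real.dist_eq] using hv)
    · rw [hτderiv, hainv]
    · rw [iteratedDeriv_succ, iteratedDeriv_one, hd2', hainv]
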